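/- Let N ≥ 1, s ∈ (1/2, 1), γ ∈ [0, 1), C₀ > 0, and let Ω ⊂ ℝ^N be a bounded domain with C² boundary. There exist C > 0 and ρ₀ > 0, depending on N, s, γ, C₀ and Ω, such that for every ρ ∈ (0, ρ₀), every measurable u : Ω → ℝ with 0 ≤ u(z) ≤ C₀ d(z)^{−γ} for all z ∈ Ω, and every x ∈ Ω with d(x) > 2ρ, one has C_{N,s} ∫_{{z ∈ Ω : d(z) ≤ ρ}} u(z) |z − x|^{−(N+2s)} dz ≤ C ρ^{−γ−2s}. -/

import Mathlib

open Filter MeasureTheory Metric Set Topology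
open scoped ENNReal

noncomputable section

/-- Euclidean space ℝ^N. -/
abbrev EucN (N : ℕ) := EuclideanSpace ℝ (Fin N)

/-- The standard normalizing constant of the fractional Laplacian on ℝ^N. -/
noncomputable def CNs (N : ℕ) (s : ℝ) : ℝ :=
  4 ^ s * Real.Gamma ((N : ℝ) / 2 + s) / (Real.pi ^ ((N : ℝ) / 2) * |Real.Gamma (-s)|)

/-- Distance to the boundary of `Ω`. -/
noncomputable def bdist {N : ℕ} (Ω : Set (EucN N)) (x : EucN N) : ℝ :=
  Metric.infDist x (frontier Ω)

/-- The set `Ω_δ = {x ∈ Ω : d(x) > δ}`. -/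
def innerSet {N : ℕ} (Ω : Set (EucN N)) (δ : ℝ) : Set (EucN N) :=
  {x ∈ Ω | δ < bdist Ω x}

/-- The filter of points of `Ω` whose distance to `∂Ω` tends to `0⁺`. -/
def toBoundary {N : ℕ} (Ω : Set (EucN N)) : Filter (EucN N) :=
  Filter.comap (bdist Ω) (nhdsWithin 0 (Set.Ioi 0)) ⊓ Filter.principal Ω

/-- Principal value of `∫_A F` with singularity at `x₀` converging to `L`. -/
def HasPVAt {N : ℕ} (A : Set (EucN N)) (x₀ : EucN N) (F : EucN N → ℝ) (L : ℝ) : Prop :=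
  Tendsto (fun ε : ℝ => ∫ z in A \ Metric.ball x₀ ε, F z) (nhdsWithin 0 (Set.Ioi 0)) (nhds L)

/-- The principal value of `∫_A F` with singularity at `x₀` (junk value if divergent). -/
noncomputable def pvAt {N : ℕ} (A : Set (EucN N)) (x₀ : EucN N) (F : EucN N → ℝ) : ℝ :=
  limUnder (nhdsWithin (0 : ℝ) (Set.Ioi 0))
    (fun ε : ℝ => ∫ z in A \ Metric.ball x₀ ε, F z)

/-- The kernel `z ↦ (u z − u x)/|x − z|^{N+2s}`. -/
noncomputable def csKernel {N : ℕ} (s : ℝ) (u : EucN N → ℝ) (x z : EucN N) : ℝ :=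
  (u z - u x) / dist x z ^ ((N : ℝ) + 2 * s)

/-- The censored fractional Laplacian `(−Δ)_Ω^s u (x)`. -/
noncomputable def censoredLap {N : ℕ} (Ω : Set (EucN N)) (s : ℝ) (u : EucN N → ℝ)
    (x : EucN N) : ℝ :=
  -CNs N s * pvAt Ω x (csKernel s u x)

/-- The principal value defining `(−Δ)_Ω^s u (x)` converges. -/
def CensoredLapDefined {N : ℕ} (Ω : Set (EucN N)) (s : ℝ) (u : EucN N → ℝ)
    (x : EucN N) : Prop :=
  ∃ L : ℝ, HasPVAt Ω x (csKernel s u x) L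

/-- `Ω` has `C²` boundary: local level-set description by `C²` defining functions. -/
def HasC2Boundary {N : ℕ} (Ω : Set (EucN N)) : Prop :=
  ∀ x ∈ frontier Ω, ∃ (U : Set (EucN N)) (φ : EucN N → ℝ),
    IsOpen U ∧ x ∈ U ∧ ContDiffOn ℝ 2 φ U ∧ (∀ y ∈ U, fderiv ℝ φ y ≠ 0) ∧
    Ω ∩ U = {y ∈ U | φ y < 0} ∧ frontier Ω ∩ U = {y ∈ U | φ y = 0}

/-- Bounded domain with `C²` boundary. -/
def IsBoundedC2Domain {N : ℕ} (Ω : Set (EucN N)) : Prop :=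
  IsOpen Ω ∧ IsConnected Ω ∧ Bornology.IsBounded Ω ∧ HasC2Boundary Ω

/-- Evaluation of the censored operator on a test function `φ` near `x₀` and on `u` far away. -/
noncomputable def testEval {N : ℕ} (Ω : Set (EucN N)) (s : ℝ) (u φ : EucN N → ℝ)
    (x₀ : EucN N) (r : ℝ) : ℝ :=
  -CNs N s * (pvAt (Metric.ball x₀ r) x₀ (csKernel s φ x₀)
    + ∫ z in Ω \ Metric.ball x₀ r, csKernel s u x₀ z)

/-- Viscosity subsolution of `lam·u + (−Δ)_Ω^s u + T·|Du|^m = f` in `Ω'`. -/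
def IsViscositySubsol {N : ℕ} (Ω Ω' : Set (EucN N)) (s lam T mexp : ℝ)
    (f u : EucN N → ℝ) : Prop :=
  ∀ x₀ ∈ Ω', ∀ r : ℝ, 0 < r → Metric.ball x₀ r ⊆ Ω' →
    ∀ φ : EucN N → ℝ, ContDiffOn ℝ 2 φ (Metric.ball x₀ r) →
      φ x₀ = u x₀ → (∀ y ∈ Metric.ball x₀ r, u y ≤ φ y) →
      lam * u x₀ + testEval Ω s u φ x₀ r + T * ‖fderiv ℝ φ x₀‖ ^ mexp ≤ f x₀

/-- Viscosity supersolution of `lam·u + (−Δ)_Ω^s u + T·|Du|^m = f` in `Ω'`. -/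
def IsViscositySupersol {N : ℕ} (Ω Ω' : Set (EucN N)) (s lam T mexp : ℝ)
    (f u : EucN N → ℝ) : Prop :=
  ∀ x₀ ∈ Ω', ∀ r : ℝ, 0 < r → Metric.ball x₀ r ⊆ Ω' →
    ∀ φ : EucN N → ℝ, ContDiffOn ℝ 2 φ (Metric.ball x₀ r) →
      φ x₀ = u x₀ → (∀ y ∈ Metric.ball x₀ r, φ y ≤ u y) →
      f x₀ ≤ lam * u x₀ + testEval Ω s u φ x₀ r + T * ‖fderiv ℝ φ x₀‖ ^ mexp

/-- Viscosity solution. -/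
def IsViscositySol {N : ℕ} (Ω Ω' : Set (EucN N)) (s lam T mexp : ℝ)
    (f u : EucN N → ℝ) : Prop :=
  IsViscositySubsol Ω Ω' s lam T mexp f u ∧ IsViscositySupersol Ω Ω' s lam T mexp f u

/-- Strict viscosity subsolution. -/
def IsStrictViscositySubsol {N : ℕ} (Ω Ω' : Set (EucN N)) (s lam T mexp : ℝ)
    (f u : EucN N → ℝ) : Prop :=
  ∀ x₀ ∈ Ω', ∀ r : ℝ, 0 < r → Metric.ball x₀ r ⊆ Ω' →
    ∀ φ : EucN N → ℝ, ContDiffOn ℝ 2 φ (Metric.ball x₀ r) →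
      φ x₀ = u x₀ → (∀ y ∈ Metric.ball x₀ r, u y ≤ φ y) →
      lam * u x₀ + testEval Ω s u φ x₀ r + T * ‖fderiv ℝ φ x₀‖ ^ mexp < f x₀

/-- Strict viscosity supersolution. -/
def IsStrictViscositySupersol {N : ℕ} (Ω Ω' : Set (EucN N)) (s lam T mexp : ℝ)
    (f u : EucN N → ℝ) : Prop :=
  ∀ x₀ ∈ Ω', ∀ r : ℝ, 0 < r → Metric.ball x₀ r ⊆ Ω' →
    ∀ φ : EucN N → ℝ, ContDiffOn ℝ 2 φ (Metric.ball x₀ r) →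
      φ x₀ = u x₀ → (∀ y ∈ Metric.ball x₀ r, φ y ≤ u y) →
      f x₀ < lam * u x₀ + testEval Ω s u φ x₀ r + T * ‖fderiv ℝ φ x₀‖ ^ mexp

/-- Local Hölder regularity of order `θ ∈ (k, k+1]`: `u ∈ C^{k,θ−k}_loc(Ω)`. -/
def CHolderLoc {N : ℕ} (θ : ℝ) (Ω : Set (EucN N)) (u : EucN N → ℝ) : Prop :=
  ∃ k : ℕ, (k : ℝ) < θ ∧ θ ≤ (k : ℝ) + 1 ∧ ContDiffOn ℝ k u Ω ∧
    ∀ K : Set (EucN N), IsCompact K → K ⊆ Ω → ∃ C > 0, ∀ x ∈ K, ∀ y ∈ K,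
      ‖iteratedFDerivWithin ℝ k u Ω x - iteratedFDerivWithin ℝ k u Ω y‖
        ≤ C * dist x y ^ (θ - k)

/-- `f` is locally Hölder continuous in `Ω`. -/
def LocHolder {N : ℕ} (Ω : Set (EucN N)) (f : EucN N → ℝ) : Prop :=
  ∃ θ : ℝ, θ ∈ Set.Ioc (0 : ℝ) 1 ∧ ∀ K : Set (EucN N), IsCompact K → K ⊆ Ω →
    ∃ C > 0, ∀ x ∈ K, ∀ y ∈ K, |f x - f y| ≤ C * dist x y ^ θ

/-- The boundary profile `g_γ`. -/
noncomputable def ggam {N : ℕ} (Ω : Set (EucN N)) (γ : ℝ) (x : EucN N) : ℝ :=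
  if 0 < γ then bdist Ω x ^ (-γ) else -Real.log (bdist Ω x)

/-- `v` is in the `γ`-class: `−∞ < liminf v/g_γ ≤ limsup v/g_γ < +∞` at `∂Ω`. -/
def InGammaClass {N : ℕ} (Ω : Set (EucN N)) (γ : ℝ) (v : EucN N → ℝ) : Prop :=
  (∃ a : ℝ, ∀ᶠ x in toBoundary Ω, a ≤ v x / ggam Ω γ x) ∧
  (∃ b : ℝ, ∀ᶠ x in toBoundary Ω, v x / ggam Ω γ x ≤ b)

/-- `u` blows up at `∂Ω`. -/
def BlowsUp {N : ℕ} (Ω : Set (EucN N)) (u : EucN N → ℝ) : Prop :=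
  Tendsto u (toBoundary Ω) atTop

/-- The assumption `d(x)^{γ+2s} f(x) → C₁` as `d(x) → 0⁺`. -/
def BoundaryRate {N : ℕ} (Ω : Set (EucN N)) (s γ : ℝ) (f : EucN N → ℝ) (C₁ : ℝ) : Prop :=
  Tendsto (fun x => bdist Ω x ^ (γ + 2 * s) * f x) (toBoundary Ω) (nhds C₁)

/-- The constant `c(N,s,β)`, a principal value over `{(t,y') : t > −1}`. -/
noncomputable def cBeta (N : ℕ) [NeZero N] (s β : ℝ) : ℝ :=
  CNs N s * pvAt {w : EucN N | -1 < w 0} 0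
    (fun w => ((1 + w 0) ^ β - 1) / ‖w‖ ^ ((N : ℝ) + 2 * s))

/-- The constant `c(N,s)` of the logarithmic barrier. -/
noncomputable def cLog (N : ℕ) [NeZero N] (s : ℝ) : ℝ :=
  CNs N s * pvAt {w : EucN N | -1 < w 0} 0
    (fun w => Real.log (1 + w 0) / ‖w‖ ^ ((N : ℝ) + 2 * s))

/-- `C₀` is a positive root of the equation defining the main blow-up constant. -/
def IsBlowUpConstant (N : ℕ) [NeZero N] (s m γ C₁ C₀ : ℝ) : Prop :=
  0 < C₀ ∧
  (m < 2 * s → -C₀ * cBeta N s γ + γ ^ m * C₀ ^ m - C₁ = 0) ∧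
  (m = 2 * s → -C₀ * cLog N s + C₀ ^ (2 * s) - C₁ = 0)

/-- Minimal large (blow-up) viscosity solution of `lam·u + (−Δ)_Ω^s u + |Du|^m = f` in `Ω`. -/
def IsMinimalLargeSol {N : ℕ} (Ω : Set (EucN N)) (s lam mexp : ℝ)
    (f u : EucN N → ℝ) : Prop :=
  ContinuousOn u Ω ∧ IsViscositySol Ω Ω s lam 1 mexp f u ∧ BlowsUp Ω u ∧
  ∀ v : EucN N → ℝ, ContinuousOn v Ω → IsViscositySol Ω Ω s lam 1 mexp f v →
    BlowsUp Ω v → ∀ x ∈ Ω, u x ≤ v x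

lemma fubini_box {n : ℕ} (S : Set (EuclideanSpace ℝ (Fin (n+1)))) (hS : MeasurableSet S)
    (x : EuclideanSpace ℝ (Fin (n+1))) (r h : ℝ)
    (hbox : ∀ w ∈ S, ∀ i, |w i - x i| ≤ r)
    (hslice : ∀ w₁ ∈ S, ∀ w₂ ∈ S, (∀ i, i ≠ 0 → w₁ i = w₂ i) → |w₁ 0 - w₂ 0| ≤ h) :
    volume S ≤ ENNReal.ofReal (2*h) * ENNReal.ofReal (2*r) ^ n := by
  classical
  set T : EuclideanSpace ℝ (Fin (n+1)) ≃ᵐ ℝ × (Fin n → ℝ) :=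
    (MeasurableEquiv.toLp 2 (Fin (n+1) → ℝ)).symm.trans
      (MeasurableEquiv.piFinSuccAbove (fun _ : Fin (n+1) => ℝ) 0) with hT
  have hTapp : ∀ w : EuclideanSpace ℝ (Fin (n+1)),
      T w = (w 0, fun i : Fin n => w i.succ) := by
    intro w
    simp only [hT, MeasurableEquiv.trans_apply, MeasurableEquiv.piFinSuccAbove_apply]
    rfl
  have hTvp : MeasurePreserving T volume volume :=
    (volume_preserving_piFinSuccAbove (fun _ : Fin (n+1) => ℝ) 0).comp
      (EuclideanSpace.volume_preserving_symm_measurableEquiv_toLp (Fin (n+1)))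
  set S' : Set (ℝ × (Fin n → ℝ)) := T '' S with hS'
  have hS'm : MeasurableSet S' := T.measurableSet_image.2 hS
  have hvol : volume S = volume S' := by
    have : S = T ⁻¹' S' := by rw [hS', Set.preimage_image_eq S T.injective]
    rw [this, hTvp.measure_preimage hS'm.nullMeasurableSet]
  set B : Set (Fin n → ℝ) := univ.pi fun i : Fin n => Icc (x i.succ - r) (x i.succ + r) with hB
  have hBm : MeasurableSet B := MeasurableSet.univ_pi fun i => measurableSet_Icc
  have key : ∀ y : Fin n → ℝ, volume ((fun τ => (τ, y)) ⁻¹' S')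
      ≤ B.indicator (fun _ => ENNReal.ofReal (2*h)) y := by
    intro y
    by_cases hy : ∃ τ₀, (τ₀, y) ∈ S'
    · obtain ⟨τ₀, hτ₀⟩ := hy
      obtain ⟨w₀, hw₀S, hw₀⟩ := hτ₀
      rw [hTapp w₀, Prod.mk.injEq] at hw₀
      obtain ⟨hw₀1, hw₀2⟩ := hw₀
      have hyB : y ∈ B := by
        intro i _
        have := hbox w₀ hw₀S i.succ
        have hyi : y i = w₀ i.succ := by rw [← hw₀2]
        have h2 := abs_le.1 this
        constructor <;> linarith [h2.1, h2.2]
      have hsub : (fun τ => (τ, y)) ⁻¹' S' ⊆ Icc (τ₀ - h) (τ₀ + h) := by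
        intro τ hτ
        obtain ⟨w, hwS, hw⟩ := hτ
        rw [hTapp w, Prod.mk.injEq] at hw
        obtain ⟨hw1, hw2⟩ := hw
        have hagree : ∀ i, i ≠ 0 → w i = w₀ i := by
          intro i hi
          obtain ⟨j, rfl⟩ := Fin.exists_succ_eq.2 hi
          have h1 : w j.succ = y j := by rw [← hw2]
          have h2 : w₀ j.succ = y j := by rw [← hw₀2]
          rw [h1, h2]
        have := hslice w hwS w₀ hw₀S hagree
        rw [hw1, hw₀1] at this
        have := abs_le.1 this
        constructor <;> linarith [this.1, this.2]
      calc volume ((fun τ => (τ, y)) ⁻¹' S') ≤ volume (Icc (τ₀ - h) (τ₀ + h)) :=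
            measure_mono hsub
        _ = ENNReal.ofReal (2*h) := by rw [Real.volume_Icc]; ring_nf
        _ = B.indicator (fun _ => ENNReal.ofReal (2*h)) y := by
            rw [Set.indicator_of_mem hyB]
    · have : (fun τ => (τ, y)) ⁻¹' S' = ∅ := by
        ext τ; simp only [mem_preimage, mem_empty_iff_false, iff_false]
        exact fun hc => hy ⟨τ, hc⟩
      rw [this, measure_empty]
      exact zero_le
  calc volume S = volume S' := hvol
    _ = ∫⁻ y, volume ((fun τ => (τ, y)) ⁻¹' S') := by
        rw [MeasureTheory.Measure.volume_eq_prod, Measure.prod_apply_symm hS'm]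
    _ ≤ ∫⁻ y, B.indicator (fun _ => ENNReal.ofReal (2*h)) y := lintegral_mono key
    _ = ENNReal.ofReal (2*h) * volume B := by
        rw [lintegral_indicator hBm, setLIntegral_const]
    _ = ENNReal.ofReal (2*h) * ENNReal.ofReal (2*r) ^ n := by
        rw [hB, volume_pi_pi]
        congr 1
        have : ∀ i : Fin n, volume (Icc (x i.succ - r) (x i.succ + r)) = ENNReal.ofReal (2*r) := by
          intro i; rw [Real.volume_Icc]; ring_nf
        simp only [this, Finset.prod_const, Finset.card_univ, Fintype.card_fin]

set_option maxHeartbeats 1000000 in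
lemma pointLocal {n : ℕ} (Ω : Set (EucN (n+1))) (hΩ : IsBoundedC2Domain Ω)
    (hFc : IsCompact (frontier Ω)) (hFne : (frontier Ω).Nonempty)
    (p : EucN (n+1)) (hp : p ∈ frontier Ω) :
    ∃ ε > (0:ℝ), ∃ Kp > (0:ℝ), ∀ t : ℝ, 0 < t → t ≤ ε →
      ∀ (x : EucN (n+1)) (r : ℝ),
      volume ({z | z ∈ Ω ∧ bdist Ω z ≤ t} ∩ Metric.closedBall p ε ∩ Metric.closedBall x r)
        ≤ ENNReal.ofReal (Kp * t) * ENNReal.ofReal (2*r) ^ n := by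
  obtain ⟨hopen, hconn, hbdd, hC2⟩ := hΩ
  obtain ⟨U, φ, hUo, hpU, hφ, hgrad, hΩU, hFU⟩ := hC2 p hp
  have hφdiff : ∀ y ∈ U, DifferentiableAt ℝ φ y := fun y hy =>
    (hφ.differentiableOn (by norm_num)).differentiableAt (hUo.mem_nhds hy)
  have hfc : ContinuousOn (fderiv ℝ φ) U := by
    have h2 : ContDiffOn ℝ (1+1) φ U := by exact_mod_cast hφ
    exact ((contDiffOn_succ_iff_fderiv_of_isOpen hUo).1 h2).2.2.continuousOn
  -- choose a good direction e
  have hDp : fderiv ℝ φ p ≠ 0 := hgrad p hpU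
  obtain ⟨v, hv⟩ : ∃ v, fderiv ℝ φ p v ≠ 0 := by
    by_contra hcon; push_neg at hcon
    exact hDp (ContinuousLinearMap.ext fun w => by simp [hcon w])
  obtain ⟨v', hv'⟩ : ∃ v', 0 < fderiv ℝ φ p v' := by
    rcases hv.lt_or_gt with h | h
    · exact ⟨-v, by simpa using h⟩
    · exact ⟨v, h⟩
  have hv'0 : v' ≠ 0 := by rintro rfl; simp at hv'
  set e : EucN (n+1) := ‖v'‖⁻¹ • v' with he_def
  have he1 : ‖e‖ = 1 := norm_smul_inv_norm hv'0
  have hDpe : 0 < fderiv ℝ φ p e := by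
    rw [he_def, ContinuousLinearMap.map_smul, smul_eq_mul]
    exact mul_pos (inv_pos.2 (norm_pos_iff.2 hv'0)) hv'
  set c : ℝ := fderiv ℝ φ p e / 2 with hc_def
  have hc : 0 < c := by positivity
  set L : ℝ := ‖fderiv ℝ φ p‖ + 1 with hL_def
  have hL : 0 < L := by positivity
  -- find ε
  have hca : ContinuousAt (fderiv ℝ φ) p := hfc.continuousAt (hUo.mem_nhds hpU)
  have hcae : ContinuousAt (fun y => fderiv ℝ φ y e) p :=
    (ContinuousLinearMap.apply ℝ ℝ e).continuous.continuousAt.comp hca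
  have hcan : ContinuousAt (fun y => ‖fderiv ℝ φ y‖) p := hca.norm
  have hev : ∀ᶠ y in 𝓝 p, y ∈ U ∧ c < fderiv ℝ φ y e ∧ ‖fderiv ℝ φ y‖ < L := by
    have h1 : ∀ᶠ y in 𝓝 p, y ∈ U := hUo.mem_nhds hpU
    have h2 : ∀ᶠ y in 𝓝 p, c < fderiv ℝ φ y e := hcae.eventually (eventually_gt_nhds (by linarith))
    have h3 : ∀ᶠ y in 𝓝 p, ‖fderiv ℝ φ y‖ < L := hcan.eventually (eventually_lt_nhds (by simp [hL_def]))
    filter_upwards [h1, h2, h3] with y hy1 hy2 hy3 using ⟨hy1, hy2, hy3⟩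
  obtain ⟨δ, hδ, hδball⟩ := Metric.eventually_nhds_iff.1 hev
  set ε : ℝ := δ / 3 with hε_def
  have hε : 0 < ε := by positivity
  have hU2 : ∀ y ∈ Metric.closedBall p (2*ε), y ∈ U ∧ c < fderiv ℝ φ y e ∧ ‖fderiv ℝ φ y‖ < L := by
    intro y hy
    apply hδball
    have := Metric.mem_closedBall.1 hy
    calc dist y p ≤ 2 * ε := this
      _ < δ := by rw [hε_def]; linarith
  have hLip : ∀ z ∈ Metric.closedBall p (2*ε), ∀ q ∈ Metric.closedBall p (2*ε),
      |φ z - φ q| ≤ L * ‖z - q‖ := by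
    intro z hz q hq
    have := (convex_closedBall p (2*ε)).norm_image_sub_le_of_norm_fderiv_le
      (fun y hy => hφdiff y (hU2 y hy).1) (fun y hy => (hU2 y hy).2.2.le) hq hz
    simpa [Real.norm_eq_abs] using this
  refine ⟨ε, hε, 4*L/c, by positivity, ?_⟩
  intro t ht htε x r
  set S : Set (EucN (n+1)) :=
    (Metric.closedBall p ε ∩ φ ⁻¹' (Icc (-(L*t)) (L*t))) ∩ Metric.closedBall x r with hS_def
  have hScl : IsClosed S := by
    apply IsClosed.inter _ Metric.isClosed_closedBall
    exact ContinuousOn.preimage_isClosed_of_isClosed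
      ((hφ.continuousOn).mono (fun y hy => (hU2 y (by
        exact Metric.closedBall_subset_closedBall (by linarith) hy)).1))
      Metric.isClosed_closedBall isClosed_Icc
  have hSm : MeasurableSet S := hScl.measurableSet
  -- the original set is inside S
  have hsub : {z | z ∈ Ω ∧ bdist Ω z ≤ t} ∩ Metric.closedBall p ε ∩ Metric.closedBall x r ⊆ S := by
    rintro z ⟨⟨⟨hzΩ, hzd⟩, hzp⟩, hzx⟩
    refine ⟨⟨hzp, ?_⟩, hzx⟩
    obtain ⟨q, hqF, hq⟩ := hFc.exists_infDist_eq_dist hFne z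
    have hdzq : dist z q ≤ t := by rw [← hq]; exact hzd
    have hq2 : q ∈ Metric.closedBall p (2*ε) := by
      rw [Metric.mem_closedBall]
      calc dist q p ≤ dist q z + dist z p := dist_triangle q z p
        _ ≤ t + ε := add_le_add (by rwa [dist_comm]) (Metric.mem_closedBall.1 hzp)
        _ ≤ 2 * ε := by linarith
    have hz2 : z ∈ Metric.closedBall p (2*ε) :=
      Metric.closedBall_subset_closedBall (by linarith) hzp
    have hφq : φ q = 0 := by
      have hqU : q ∈ U := (hU2 q hq2).1
      have : q ∈ {y ∈ U | φ y = 0} := hFU ▸ ⟨hqF, hqU⟩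
      exact this.2
    have habs : |φ z| ≤ L * t := by
      have h1 := hLip z hz2 q hq2
      rw [hφq, sub_zero] at h1
      calc |φ z| ≤ L * ‖z - q‖ := h1
        _ ≤ L * t := by
          apply mul_le_mul_of_nonneg_left _ hL.le
          rw [← dist_eq_norm]; exact hdzq
    exact abs_le.1 habs
  -- orthonormal basis adapted to e
  have hcard : Module.finrank ℝ (EucN (n+1)) = Fintype.card (Fin (n+1)) := by
    simp [finrank_euclideanSpace_fin]
  have hortho : Orthonormal ℝ (Set.restrict ({0} : Set (Fin (n+1))) (fun _ => e)) := by
    constructor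
    · intro i; exact he1
    · intro i j hij
      exact absurd (Subtype.ext ((i.2 : i.1 ∈ ({0}:Set (Fin (n+1)))).trans
        ((j.2 : j.1 ∈ ({0}:Set (Fin (n+1)))).symm))) hij
  obtain ⟨b, hb⟩ := hortho.exists_orthonormalBasis_extension_of_card_eq hcard
  have hb0 : b 0 = e := hb 0 rfl
  -- transfer to coordinates
  set Sw : Set (EuclideanSpace ℝ (Fin (n+1))) := ⇑(b.repr.symm) ⁻¹' S with hSw_def
  have hSwm : MeasurableSet Sw := b.repr.symm.continuous.measurable hSm
  have hvolSw : volume Sw = volume S :=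
    b.measurePreserving_repr_symm.measure_preimage hSm.nullMeasurableSet
  -- the key one-dimensional estimate
  have hmain : ∀ z₂ ∈ S, ∀ τ : ℝ, 0 < τ → z₂ + τ • e ∈ S → τ ≤ 2*L*t/c := by
    intro z₂ hz₂ τ hτ hz₁
    set z₁ := z₂ + τ • e with hz₁def
    have hmem : ∀ σ ∈ Icc (0:ℝ) τ, z₂ + σ • e ∈ Metric.closedBall p ε := by
      intro σ hσ
      have h01 : σ / τ ∈ Icc (0:ℝ) 1 := ⟨div_nonneg hσ.1 hτ.le, by
        rw [div_le_one hτ]; exact hσ.2⟩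
      have := (convex_closedBall p ε).add_smul_sub_mem hz₂.1.1 hz₁.1.1 h01
      have heq : z₂ + (σ/τ) • (z₁ - z₂) = z₂ + σ • e := by
        rw [hz₁def]; rw [add_sub_cancel_left, smul_smul, div_mul_cancel₀ _ hτ.ne']
      rwa [heq] at this
    have hder : ∀ σ ∈ Icc (0:ℝ) τ, HasDerivAt (fun σ : ℝ => φ (z₂ + σ • e))
        (fderiv ℝ φ (z₂ + σ • e) e) σ := by
      intro σ hσ
      have hline : HasDerivAt (fun σ : ℝ => z₂ + σ • e) e σ := by
        simpa using ((hasDerivAt_id σ).smul_const e).const_add z₂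
      have hU' : z₂ + σ • e ∈ U := (hU2 _ (Metric.closedBall_subset_closedBall
        (by linarith) (hmem σ hσ))).1
      exact ((hφdiff _ hU').hasFDerivAt).comp_hasDerivAt σ hline
    obtain ⟨ξ, hξ, hslope⟩ := exists_hasDerivAt_eq_slope (fun σ : ℝ => φ (z₂ + σ • e))
      (fun σ => fderiv ℝ φ (z₂ + σ • e) e) hτ
      (fun σ hσ => ((hder σ hσ).continuousAt).continuousWithinAt)
      (fun σ hσ => hder σ (Ioo_subset_Icc_self hσ))
    have hcξ : c < fderiv ℝ φ (z₂ + ξ • e) e :=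
      (hU2 _ (Metric.closedBall_subset_closedBall (by linarith)
        (hmem ξ (Ioo_subset_Icc_self hξ)))).2.1
    have hval : (φ z₁ - φ z₂) / τ = fderiv ℝ φ (z₂ + ξ • e) e := by
      rw [hslope]
      simp [hz₁def]
    have hφ1 := hz₁.1.2
    have hφ2 := hz₂.1.2
    simp only [mem_preimage, mem_Icc] at hφ1 hφ2
    have hnum : φ z₁ - φ z₂ ≤ 2*L*t := by linarith [hφ1.2, hφ2.1]
    have : c < (φ z₁ - φ z₂) / τ := by rw [hval]; exact hcξ
    have hcτ : c * τ < φ z₁ - φ z₂ := by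
      rw [lt_div_iff₀ hτ] at this; linarith [this]
    rw [le_div_iff₀ hc]
    nlinarith [hcτ, hnum]
  -- apply fubini_box
  have hfb := fubini_box Sw hSwm (b.repr x) r (2*L*t/c) ?_ ?_
  · calc volume ({z | z ∈ Ω ∧ bdist Ω z ≤ t} ∩ Metric.closedBall p ε ∩ Metric.closedBall x r)
        ≤ volume S := measure_mono hsub
      _ = volume Sw := hvolSw.symm
      _ ≤ ENNReal.ofReal (2*(2*L*t/c)) * ENNReal.ofReal (2*r) ^ n := hfb
      _ = ENNReal.ofReal (4*L/c * t) * ENNReal.ofReal (2*r) ^ n := by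
          congr 2; field_simp; ring
  · -- box condition
    intro w hw i
    set z := b.repr.symm w with hz_def
    have hzS : z ∈ S := hw
    have hzx : dist z x ≤ r := Metric.mem_closedBall.1 hzS.2
    have hzrepr : b.repr z = w := by rw [hz_def]; simp
    have hwi : w i - b.repr x i = (inner ℝ (b i) (z - x) : ℝ) := by
      rw [← OrthonormalBasis.repr_apply_apply, map_sub, ← hzrepr]
      rfl
    rw [hwi]
    calc |(inner ℝ (b i) (z - x) : ℝ)| ≤ ‖b i‖ * ‖z - x‖ := abs_real_inner_le_norm _ _
      _ = ‖z - x‖ := by rw [b.orthonormal.1 i, one_mul]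
      _ ≤ r := by rw [← dist_eq_norm]; exact hzx
  · -- slice condition
    intro w₁ hw₁ w₂ hw₂ hagree
    obtain ⟨z₁, hz₁_def⟩ : ∃ z, z = b.repr.symm w₁ := ⟨_, rfl⟩
    obtain ⟨z₂, hz₂_def⟩ : ∃ z, z = b.repr.symm w₂ := ⟨_, rfl⟩
    have hw₁' : z₁ ∈ S := by rw [hz₁_def]; exact hw₁
    have hw₂' : z₂ ∈ S := by rw [hz₂_def]; exact hw₂
    have hdiff : z₁ - z₂ = (w₁ 0 - w₂ 0) • e := by
      apply b.repr.injective
      rw [map_sub, LinearIsometryEquiv.map_smul, ← hb0, b.repr_self]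
      have h1 : b.repr z₁ = w₁ := by rw [hz₁_def]; simp
      have h2 : b.repr z₂ = w₂ := by rw [hz₂_def]; simp
      rw [h1, h2]
      ext i
      by_cases hi : i = 0
      · subst hi
        simp [EuclideanSpace.single_apply]
      · simp [EuclideanSpace.single_apply, hi, hagree i hi]
    rcases lt_trichotomy (w₁ 0 - w₂ 0) 0 with hlt | heq | hgt
    · have hdiff' : z₂ - z₁ = (w₂ 0 - w₁ 0) • e := by
        rw [← neg_sub z₁ z₂, hdiff, ← neg_smul]; ring_nf
      have : z₁ + (w₂ 0 - w₁ 0) • e ∈ S := by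
        rw [← hdiff']
        have : z₁ + (z₂ - z₁) = z₂ := by abel
        rw [this]; exact hw₂'
      have hm := hmain z₁ hw₁' (w₂ 0 - w₁ 0) (by linarith) this
      rw [abs_sub_comm, abs_of_pos (by linarith : (0:ℝ) < w₂ 0 - w₁ 0)]
      exact hm
    · rw [heq, abs_zero]; positivity
    · have : z₂ + (w₁ 0 - w₂ 0) • e ∈ S := by
        rw [← hdiff]
        have : z₂ + (z₁ - z₂) = z₁ := by abel
        rw [this]; exact hw₁'
      have hm := hmain z₂ hw₂' (w₁ 0 - w₂ 0) hgt this
      rw [abs_of_pos hgt]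
      exact hm

lemma frontier_compact_nonempty {n : ℕ} (Ω : Set (EucN (n+1))) (hΩ : IsBoundedC2Domain Ω) :
    IsCompact (frontier Ω) ∧ (frontier Ω).Nonempty := by
  obtain ⟨hopen, hconn, hbdd, _⟩ := hΩ
  have hFb : Bornology.IsBounded (frontier Ω) :=
    hbdd.closure.subset frontier_subset_closure
  have hFc : IsCompact (frontier Ω) :=
    Metric.isCompact_of_isClosed_isBounded isClosed_frontier hFb
  refine ⟨hFc, ?_⟩
  by_contra hne
  rw [Set.not_nonempty_iff_eq_empty] at hne
  have hclopen : IsClopen Ω := isClopen_iff_frontier_eq_empty.2 hne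
  rcases isClopen_iff.1 hclopen with h | h
  · exact absurd h (Set.nonempty_iff_ne_empty.1 hconn.nonempty)
  · obtain ⟨R, hR⟩ := hbdd.subset_closedBall 0
    have hmem := hR (h ▸ Set.mem_univ (EuclideanSpace.single (0 : Fin (n+1)) (|R|+1)))
    rw [Metric.mem_closedBall, dist_zero_right, EuclideanSpace.norm_single,
      Real.norm_eq_abs] at hmem
    have := abs_nonneg R
    rw [abs_of_nonneg (by linarith)] at hmem
    have := le_abs_self R
    linarith

lemma tube_bound {n : ℕ} (Ω : Set (EucN (n+1))) (hΩ : IsBoundedC2Domain Ω) :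
    ∃ K > (0:ℝ), ∃ t₀ > (0:ℝ), ∀ t : ℝ, 0 < t → t ≤ t₀ → ∀ (x : EucN (n+1)) (r : ℝ),
      volume ({z | z ∈ Ω ∧ bdist Ω z ≤ t} ∩ Metric.closedBall x r)
        ≤ ENNReal.ofReal (K * t) * ENNReal.ofReal (2*r) ^ n := by
  obtain ⟨hFc, hFne⟩ := frontier_compact_nonempty Ω hΩ
  have hpl : ∀ p : frontier Ω, ∃ ε > (0:ℝ), ∃ Kp > (0:ℝ), ∀ t : ℝ, 0 < t → t ≤ ε →
      ∀ (x : EucN (n+1)) (r : ℝ),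
      volume ({z | z ∈ Ω ∧ bdist Ω z ≤ t} ∩ Metric.closedBall (p : EucN (n+1)) ε
          ∩ Metric.closedBall x r)
        ≤ ENNReal.ofReal (Kp * t) * ENNReal.ofReal (2*r) ^ n :=
    fun p => pointLocal Ω hΩ hFc hFne p p.2
  choose ε hε Kp hKp hbound using hpl
  obtain ⟨s, hs⟩ := hFc.elim_finite_subcover
    (fun p : frontier Ω => Metric.ball (p : EucN (n+1)) (ε p / 2))
    (fun p => Metric.isOpen_ball)
    (fun q hq => Set.mem_iUnion.2 ⟨⟨q, hq⟩, by
      simp only [Metric.mem_ball, dist_self]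
      exact half_pos (hε ⟨q, hq⟩)⟩)
  have hsne : s.Nonempty := by
    obtain ⟨q, hq⟩ := hFne
    obtain ⟨i, hi, _⟩ := Set.mem_iUnion₂.1 (hs hq)
    exact ⟨i, hi⟩
  set t₀ : ℝ := s.inf' hsne (fun i => ε i / 2) with ht₀_def
  have ht₀pos : 0 < t₀ := by
    rw [ht₀_def, Finset.lt_inf'_iff]
    exact fun i _ => half_pos (hε i)
  refine ⟨∑ i ∈ s, Kp i, Finset.sum_pos (fun i _ => hKp i) hsne, t₀, ht₀pos, ?_⟩
  intro t ht htt₀ x r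
  have hsub : {z | z ∈ Ω ∧ bdist Ω z ≤ t} ∩ Metric.closedBall x r ⊆
      ⋃ i ∈ s, ({z | z ∈ Ω ∧ bdist Ω z ≤ t} ∩ Metric.closedBall (i : EucN (n+1)) (ε i)
        ∩ Metric.closedBall x r) := by
    rintro z ⟨⟨hzΩ, hzd⟩, hzx⟩
    obtain ⟨q, hqF, hq⟩ := hFc.exists_infDist_eq_dist hFne z
    obtain ⟨i, hi, hqi⟩ := Set.mem_iUnion₂.1 (hs hqF)
    refine Set.mem_iUnion₂.2 ⟨i, hi, ⟨⟨⟨hzΩ, hzd⟩, ?_⟩, hzx⟩⟩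
    rw [Metric.mem_closedBall]
    have ht₀i : t₀ ≤ ε i / 2 := Finset.inf'_le _ hi
    calc dist z (i : EucN (n+1)) ≤ dist z q + dist q (i : EucN (n+1)) := dist_triangle _ _ _
      _ ≤ t + ε i / 2 := add_le_add (by rw [← hq]; exact hzd) (Metric.mem_ball.1 hqi).le
      _ ≤ ε i := by linarith [le_trans htt₀ ht₀i]
  calc volume ({z | z ∈ Ω ∧ bdist Ω z ≤ t} ∩ Metric.closedBall x r)
      ≤ ∑ i ∈ s, volume ({z | z ∈ Ω ∧ bdist Ω z ≤ t}
          ∩ Metric.closedBall (i : EucN (n+1)) (ε i) ∩ Metric.closedBall x r) :=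
        le_trans (measure_mono hsub) (measure_biUnion_finset_le _ _)
    _ ≤ ∑ i ∈ s, ENNReal.ofReal (Kp i * t) * ENNReal.ofReal (2*r) ^ n :=
        Finset.sum_le_sum (fun i hi => hbound i t ht
          (le_trans htt₀ (le_trans (Finset.inf'_le _ hi) (by linarith [hε i]))) x r)
    _ = ENNReal.ofReal ((∑ i ∈ s, Kp i) * t) * ENNReal.ofReal (2*r) ^ n := by
        rw [← Finset.sum_mul,
          ← ENNReal.ofReal_sum_of_nonneg (fun i _ => mul_nonneg (hKp i).le ht.le),
          ← Finset.sum_mul]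

lemma dyadic_algebra (n j k : ℕ) (ρ γ s : ℝ) (hρ : 0 < ρ) :
    (ρ * (2:ℝ)⁻¹ ^ (j+1)) ^ (-γ) * (ρ * (2:ℝ) ^ k) ^ (-(((n:ℝ)+1) + 2*s))
      * (ρ * (2:ℝ)⁻¹ ^ j) * (2 * (ρ * (2:ℝ) ^ (k+1))) ^ n
    = 2 ^ γ * 4 ^ n * ρ ^ (-γ - 2*s) * ((2:ℝ) ^ γ / 2) ^ j * ((2:ℝ) ^ (-(1+2*s))) ^ k := by
  have h2 : (0:ℝ) < 2 := two_pos
  have hb1 : (0:ℝ) < ρ * (2:ℝ)⁻¹ ^ (j+1) := by positivity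
  have hb2 : (0:ℝ) < ρ * (2:ℝ) ^ k := by positivity
  have hb3 : (0:ℝ) < ρ * (2:ℝ)⁻¹ ^ j := by positivity
  have hb4 : (0:ℝ) < 2 * (ρ * (2:ℝ) ^ (k+1)) := by positivity
  have hL : 0 < (ρ * (2:ℝ)⁻¹ ^ (j+1)) ^ (-γ) * (ρ * (2:ℝ) ^ k) ^ (-(((n:ℝ)+1) + 2*s))
      * (ρ * (2:ℝ)⁻¹ ^ j) * (2 * (ρ * (2:ℝ) ^ (k+1))) ^ n := by positivity
  have hR : 0 < (2:ℝ) ^ γ * 4 ^ n * ρ ^ (-γ - 2*s) * ((2:ℝ) ^ γ / 2) ^ j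
      * ((2:ℝ) ^ (-(1+2*s))) ^ k := by positivity
  have l1 : Real.log (ρ * (2:ℝ)⁻¹ ^ (j+1)) = Real.log ρ - ((j:ℝ)+1) * Real.log 2 := by
    rw [Real.log_mul hρ.ne' (by positivity), Real.log_pow, Real.log_inv]; push_cast; ring
  have l2 : Real.log (ρ * (2:ℝ) ^ k) = Real.log ρ + (k:ℝ) * Real.log 2 := by
    rw [Real.log_mul hρ.ne' (by positivity), Real.log_pow]
  have l3 : Real.log (ρ * (2:ℝ)⁻¹ ^ j) = Real.log ρ - (j:ℝ) * Real.log 2 := by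
    rw [Real.log_mul hρ.ne' (by positivity), Real.log_pow, Real.log_inv]; push_cast; ring
  have l4 : Real.log (2 * (ρ * (2:ℝ) ^ (k+1))) = Real.log ρ + ((k:ℝ)+2) * Real.log 2 := by
    rw [Real.log_mul two_ne_zero (by positivity), Real.log_mul hρ.ne' (by positivity),
      Real.log_pow]
    push_cast; ring
  have l5 : Real.log ((2:ℝ) ^ γ / 2) = (γ - 1) * Real.log 2 := by
    rw [Real.log_div (by positivity) two_ne_zero, Real.log_rpow h2]; ring
  have l6 : Real.log ((4:ℝ)) = 2 * Real.log 2 := by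
    rw [show (4:ℝ) = 2^(2:ℕ) by norm_num, Real.log_pow]; push_cast; ring
  rw [← Real.exp_log hL, ← Real.exp_log hR]
  congr 1
  rw [Real.log_mul (by positivity) (by positivity), Real.log_mul (by positivity) (by positivity),
    Real.log_mul (by positivity) (by positivity), Real.log_rpow hb1, Real.log_rpow hb2,
    Real.log_pow, l1, l2, l3, l4]
  rw [Real.log_mul (by positivity) (by positivity), Real.log_mul (by positivity) (by positivity),
    Real.log_mul (by positivity) (by positivity), Real.log_mul (by positivity) (by positivity),
    Real.log_rpow h2, Real.log_rpow hρ, Real.log_pow, Real.log_pow, Real.log_pow, l5, l6,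
    Real.log_rpow h2]
  push_cast
  ring

/-- Uniform bound for the nonlocal tail of functions controlled by
`d^{−γ}` integrated near the boundary. -/
theorem boundary_tail_estimate
    (N : ℕ) (hN : 1 ≤ N) (s γ C₀ : ℝ) (hs : s ∈ Set.Ioo (1 / 2 : ℝ) 1)
    (hγ : γ ∈ Set.Ico (0 : ℝ) 1) (hC₀ : 0 < C₀)
    (Ω : Set (EucN N)) (hΩ : IsBoundedC2Domain Ω) :
    ∃ C > (0 : ℝ), ∃ ρ₀ > (0 : ℝ), ∀ ρ ∈ Set.Ioo (0 : ℝ) ρ₀,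
      ∀ u : EucN N → ℝ, Measurable u →
        (∀ z ∈ Ω, 0 ≤ u z ∧ u z ≤ C₀ * bdist Ω z ^ (-γ)) →
        ∀ x ∈ Ω, 2 * ρ < bdist Ω x →
          CNs N s * ∫ z in {z ∈ Ω | bdist Ω z ≤ ρ}, u z * ‖z - x‖ ^ (-((N : ℝ) + 2 * s))
            ≤ C * ρ ^ (-γ - 2 * s) := by
  obtain ⟨n, rfl⟩ : ∃ n, N = n + 1 := ⟨N - 1, (Nat.succ_pred_eq_of_pos hN).symm⟩
  obtain ⟨hγ0, hγ1⟩ := hγ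
  obtain ⟨hs1, hs2⟩ := hs
  have hs0 : 0 < s := lt_trans (by norm_num) hs1
  obtain ⟨K, hK, t₀, ht₀, htube⟩ := tube_bound Ω hΩ
  obtain ⟨hFc, hFne⟩ := frontier_compact_nonempty Ω hΩ
  have h2 : (0:ℝ) < 2 := two_pos
  -- geometric ratios and constants
  set q₁ : ℝ := (2:ℝ) ^ γ / 2 with hq₁_def
  have hq₁0 : 0 ≤ q₁ := by positivity
  have hq₁1 : q₁ < 1 := by
    rw [hq₁_def, div_lt_one h2]
    calc (2:ℝ) ^ γ < 2 ^ (1:ℝ) := Real.rpow_lt_rpow_of_exponent_lt (by norm_num) hγ1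
      _ = 2 := Real.rpow_one 2
  set q₂ : ℝ := (2:ℝ) ^ (-(1+2*s)) with hq₂_def
  have hq₂0 : 0 ≤ q₂ := by positivity
  have hq₂1 : q₂ < 1 := Real.rpow_lt_one_of_one_lt_of_neg (by norm_num) (by linarith)
  set G : ℝ≥0∞ := (1 - ENNReal.ofReal q₁)⁻¹ * (1 - ENNReal.ofReal q₂)⁻¹ with hG_def
  have hG1 : (1 - ENNReal.ofReal q₁)⁻¹ ≠ ⊤ := by
    rw [ENNReal.inv_ne_top, ne_eq, tsub_eq_zero_iff_le, not_le]
    exact ENNReal.ofReal_lt_one.2 hq₁1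
  have hG2 : (1 - ENNReal.ofReal q₂)⁻¹ ≠ ⊤ := by
    rw [ENNReal.inv_ne_top, ne_eq, tsub_eq_zero_iff_le, not_le]
    exact ENNReal.ofReal_lt_one.2 hq₂1
  have hGtop : G ≠ ⊤ := ENNReal.mul_ne_top hG1 hG2
  set a : ℝ := C₀ * K * (2 ^ γ * 4 ^ n) with ha_def
  have ha0 : 0 ≤ a := by positivity
  set C : ℝ := (|CNs (n+1) s| + 1) * (a * G.toReal + 1) with hC_def
  have hGt0 : 0 ≤ G.toReal := ENNReal.toReal_nonneg
  have hC : 0 < C := by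
    apply mul_pos
    · positivity
    · positivity
  refine ⟨C, hC, t₀, ht₀, ?_⟩
  rintro ρ ⟨hρ0, hρt₀⟩ u hu hub x hx hdx
  set eN : ℝ := ((n:ℝ)+1) + 2*s with heN_def
  have heN0 : 0 < eN := by rw [heN_def]; positivity
  have hbd_cont : Continuous (bdist Ω) := by
    unfold bdist; exact continuous_infDist_pt _
  have hnx_cont : Continuous (fun z : EucN (n+1) => ‖z - x‖) :=
    (continuous_id.sub continuous_const).norm
  -- measurability of the integrand
  have hrm : Measurable (fun z : EucN (n+1) => ‖z - x‖ ^ (-eN)) := by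
    have heq : (fun z : EucN (n+1) => ‖z - x‖ ^ (-eN)) =
        fun z => if ‖z - x‖ = 0 then 0 else Real.exp (Real.log ‖z - x‖ * (-eN)) := by
      funext z
      rcases eq_or_ne (‖z - x‖) 0 with hh | hh
      · rw [hh, if_pos rfl, Real.zero_rpow (by linarith)]
      · rw [if_neg hh, Real.rpow_def_of_pos (lt_of_le_of_ne (norm_nonneg _) (Ne.symm hh))]
    rw [heq]
    exact Measurable.ite (hnx_cont.measurable (measurableSet_singleton 0))
      measurable_const (((Real.measurable_log.comp hnx_cont.measurable).mul
        measurable_const).exp)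
  have hfm : Measurable (fun z : EucN (n+1) => u z * ‖z - x‖ ^ (-eN)) := hu.mul hrm
  -- the base set
  have hAm : MeasurableSet {z : EucN (n+1) | z ∈ Ω ∧ bdist Ω z ≤ ρ} := by
    have : {z : EucN (n+1) | z ∈ Ω ∧ bdist Ω z ≤ ρ} = Ω ∩ bdist Ω ⁻¹' (Iic ρ) := rfl
    rw [this]
    exact hΩ.1.measurableSet.inter (hbd_cont.measurable measurableSet_Iic)
  -- goal exponent rewriting
  have hexp : -((((n:ℕ)+1 : ℕ) : ℝ) + 2 * s) = -eN := by push_cast [heN_def]; ring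
  -- nonnegativity of integral
  have hInn : (0:ℝ) ≤ ∫ z in {z ∈ Ω | bdist Ω z ≤ ρ}, u z * ‖z - x‖ ^ (-((((n:ℕ)+1:ℕ)) + 2 * s : ℝ)) := by
    apply setIntegral_nonneg hAm
    intro z hz
    exact mul_nonneg (hub z hz.1).1 (Real.rpow_nonneg (norm_nonneg _) _)
  rw [hexp] at hInn ⊢
  set A : Set (EucN (n+1)) := {z | z ∈ Ω ∧ bdist Ω z ≤ ρ} with hA_def
  -- integral as lower integral
  have hIeq : ∫ z in A, u z * ‖z - x‖ ^ (-eN) =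
      (∫⁻ z in A, ENNReal.ofReal (u z * ‖z - x‖ ^ (-eN))).toReal :=
    integral_eq_lintegral_of_nonneg_ae
      ((ae_restrict_iff' hAm).2 (ae_of_all _ fun z hz =>
        mul_nonneg (hub z hz.1).1 (Real.rpow_nonneg (norm_nonneg _) _)))
      hfm.aestronglyMeasurable
  -- dyadic decomposition
  set S : ℕ × ℕ → Set (EucN (n+1)) := fun jk =>
    {z | (z ∈ Ω ∧ bdist Ω z ≤ ρ * (2:ℝ)⁻¹ ^ jk.1) ∧ ρ * (2:ℝ)⁻¹ ^ (jk.1+1) < bdist Ω z ∧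
      ρ * 2 ^ jk.2 ≤ ‖z - x‖ ∧ z ∈ Metric.closedBall x (ρ * 2 ^ (jk.2+1))} with hS_def
  have hSm : ∀ jk : ℕ × ℕ, MeasurableSet (S jk) := by
    intro jk
    have heqS : S jk = ((Ω ∩ bdist Ω ⁻¹' (Iic (ρ * (2:ℝ)⁻¹ ^ jk.1)))
        ∩ (bdist Ω ⁻¹' Ioi (ρ * (2:ℝ)⁻¹ ^ (jk.1+1)))
        ∩ ((fun z => ‖z - x‖) ⁻¹' Ici (ρ * 2 ^ jk.2)))
        ∩ Metric.closedBall x (ρ * 2 ^ (jk.2+1)) := by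
      ext z
      simp only [hS_def, mem_setOf_eq, mem_inter_iff, mem_preimage, mem_Iic, mem_Ioi, mem_Ici]
      tauto
    rw [heqS]
    exact (((hΩ.1.measurableSet.inter (hbd_cont.measurable measurableSet_Iic)).inter
      (hbd_cont.measurable measurableSet_Ioi)).inter
      (hnx_cont.measurable measurableSet_Ici)).inter measurableSet_closedBall
  have hcover : A ⊆ ⋃ jk : ℕ × ℕ, S jk := by
    intro z hz
    obtain ⟨hzΩ, hzρ⟩ := hz
    have hd0 : 0 < bdist Ω z := by
      have hnf : z ∉ frontier Ω := fun hf => hf.2 (by rwa [hΩ.1.interior_eq])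
      exact (isClosed_frontier.notMem_iff_infDist_pos hFne).1 hnf
    -- choose j
    have hPex : ∃ m : ℕ, ρ * (2:ℝ)⁻¹ ^ (m+1) < bdist Ω z := by
      obtain ⟨m, hm⟩ := exists_pow_lt_of_lt_one (div_pos hd0 hρ0)
        (by norm_num : (2:ℝ)⁻¹ < 1)
      refine ⟨m, ?_⟩
      have hm2 : (2:ℝ)⁻¹ ^ m * ρ < bdist Ω z := by
        have := mul_lt_mul_of_pos_right hm hρ0
        rwa [div_mul_cancel₀ _ hρ0.ne'] at this
      calc ρ * (2:ℝ)⁻¹ ^ (m+1) ≤ ρ * (2:ℝ)⁻¹ ^ m := by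
            apply mul_le_mul_of_nonneg_left _ hρ0.le
            exact pow_le_pow_of_le_one (by norm_num) (by norm_num) (Nat.le_succ m)
        _ = (2:ℝ)⁻¹ ^ m * ρ := mul_comm _ _
        _ < bdist Ω z := hm2
    have hj1 : ρ * (2:ℝ)⁻¹ ^ (Nat.find hPex + 1) < bdist Ω z := Nat.find_spec hPex
    have hj2 : bdist Ω z ≤ ρ * (2:ℝ)⁻¹ ^ (Nat.find hPex) := by
      rcases Nat.eq_zero_or_pos (Nat.find hPex) with h0 | hpos
      · rw [h0]; simpa using hzρ
      · have hmin := Nat.find_min hPex (Nat.sub_lt hpos one_pos)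
        push_neg at hmin
        have heqn : Nat.find hPex - 1 + 1 = Nat.find hPex := by omega
        rwa [heqn] at hmin
    -- choose k
    have hρnx : ρ < ‖z - x‖ := by
      have h1 : bdist Ω x ≤ bdist Ω z + dist x z := Metric.infDist_le_infDist_add_dist
      have h2 : dist x z = ‖z - x‖ := by rw [dist_comm, dist_eq_norm]
      linarith [hdx, hzρ]
    have hQex : ∃ m : ℕ, ‖z - x‖ < ρ * 2 ^ m := by
      obtain ⟨m, hm⟩ := pow_unbounded_of_one_lt (‖z - x‖ / ρ) (one_lt_two (α := ℝ))
      refine ⟨m, ?_⟩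
      have hm2 : ‖z - x‖ < 2 ^ m * ρ := by
        have := mul_lt_mul_of_pos_right hm hρ0
        rwa [div_mul_cancel₀ _ hρ0.ne'] at this
      calc ‖z - x‖ < 2 ^ m * ρ := hm2
        _ = ρ * 2 ^ m := mul_comm _ _
    have hm₀ : ‖z - x‖ < ρ * 2 ^ (Nat.find hQex) := Nat.find_spec hQex
    have hm₀pos : Nat.find hQex ≠ 0 := by
      intro h0
      rw [h0] at hm₀
      simp only [pow_zero, mul_one] at hm₀
      linarith
    obtain ⟨k, hk⟩ : ∃ k, Nat.find hQex = k + 1 :=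
      ⟨Nat.find hQex - 1, (Nat.succ_pred_eq_of_pos (Nat.pos_of_ne_zero hm₀pos)).symm⟩
    have hk1 : ρ * 2 ^ k ≤ ‖z - x‖ := by
      have hmin := Nat.find_min hQex (by omega : k < Nat.find hQex)
      push_neg at hmin
      exact hmin
    refine Set.mem_iUnion.2 ⟨(Nat.find hPex, k), ⟨⟨hzΩ, hj2⟩, hj1, hk1, ?_⟩⟩
    rw [Metric.mem_closedBall, dist_eq_norm]
    rw [hk] at hm₀
    exact hm₀.le
  -- per-piece estimate
  have hterm : ∀ jk : ℕ × ℕ, (∫⁻ z in S jk, ENNReal.ofReal (u z * ‖z - x‖ ^ (-eN)))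
      ≤ ENNReal.ofReal (a * ρ ^ (-γ - 2*s)) * ENNReal.ofReal q₁ ^ jk.1
        * ENNReal.ofReal q₂ ^ jk.2 := by
    rintro ⟨j, k⟩
    have hDj0 : (0:ℝ) < ρ * (2:ℝ)⁻¹ ^ (j+1) := by positivity
    have hRk0 : (0:ℝ) < ρ * (2:ℝ) ^ k := by positivity
    have hc₁0 : (0:ℝ) ≤ C₀ * (ρ * (2:ℝ)⁻¹ ^ (j+1)) ^ (-γ) * (ρ * (2:ℝ) ^ k) ^ (-eN) := by
      positivity
    have hpt : ∀ z ∈ S (j,k), ENNReal.ofReal (u z * ‖z - x‖ ^ (-eN)) ≤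
        ENNReal.ofReal (C₀ * (ρ * (2:ℝ)⁻¹ ^ (j+1)) ^ (-γ) * (ρ * (2:ℝ) ^ k) ^ (-eN)) := by
      intro z hz
      obtain ⟨⟨hzΩ, _⟩, hzd, hzx, _⟩ := hz
      apply ENNReal.ofReal_le_ofReal
      have e1 : bdist Ω z ^ (-γ) ≤ (ρ * (2:ℝ)⁻¹ ^ (j+1)) ^ (-γ) :=
        Real.rpow_le_rpow_of_nonpos hDj0 hzd.le (neg_nonpos.2 hγ0)
      have e2 : ‖z - x‖ ^ (-eN) ≤ (ρ * (2:ℝ) ^ k) ^ (-eN) :=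
        Real.rpow_le_rpow_of_nonpos hRk0 hzx (by linarith)
      calc u z * ‖z - x‖ ^ (-eN) ≤ (C₀ * bdist Ω z ^ (-γ)) * ‖z - x‖ ^ (-eN) :=
            mul_le_mul_of_nonneg_right (hub z hzΩ).2 (Real.rpow_nonneg (norm_nonneg _) _)
        _ ≤ C₀ * (ρ * (2:ℝ)⁻¹ ^ (j+1)) ^ (-γ) * (ρ * (2:ℝ) ^ k) ^ (-eN) :=
            mul_le_mul (mul_le_mul_of_nonneg_left e1 hC₀.le) e2
              (Real.rpow_nonneg (norm_nonneg _) _) (by positivity)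
    have hsub2 : S (j,k) ⊆ {z | z ∈ Ω ∧ bdist Ω z ≤ ρ * (2:ℝ)⁻¹ ^ j} ∩
        Metric.closedBall x (ρ * 2 ^ (k+1)) := fun z hz => ⟨hz.1, hz.2.2.2⟩
    have hμ : volume (S (j,k)) ≤ ENNReal.ofReal (K * (ρ * (2:ℝ)⁻¹ ^ j)) *
        ENNReal.ofReal (2 * (ρ * 2 ^ (k+1))) ^ n := by
      refine le_trans (measure_mono hsub2) (htube _ (by positivity) ?_ x _)
      calc ρ * (2:ℝ)⁻¹ ^ j ≤ ρ * 1 :=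
            mul_le_mul_of_nonneg_left (pow_le_one₀ (by norm_num) (by norm_num)) hρ0.le
        _ = ρ := mul_one ρ
        _ ≤ t₀ := hρt₀.le
    calc (∫⁻ z in S (j,k), ENNReal.ofReal (u z * ‖z - x‖ ^ (-eN)))
        ≤ ∫⁻ _ in S (j,k), ENNReal.ofReal (C₀ * (ρ * (2:ℝ)⁻¹ ^ (j+1)) ^ (-γ)
            * (ρ * (2:ℝ) ^ k) ^ (-eN)) := setLIntegral_mono' (hSm (j,k)) hpt
      _ = ENNReal.ofReal (C₀ * (ρ * (2:ℝ)⁻¹ ^ (j+1)) ^ (-γ) * (ρ * (2:ℝ) ^ k) ^ (-eN))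
            * volume (S (j,k)) := setLIntegral_const _ _
      _ ≤ ENNReal.ofReal (C₀ * (ρ * (2:ℝ)⁻¹ ^ (j+1)) ^ (-γ) * (ρ * (2:ℝ) ^ k) ^ (-eN))
            * (ENNReal.ofReal (K * (ρ * (2:ℝ)⁻¹ ^ j)) * ENNReal.ofReal (2 * (ρ * 2 ^ (k+1))) ^ n) :=
          mul_le_mul_right hμ _
      _ = ENNReal.ofReal ((C₀ * (ρ * (2:ℝ)⁻¹ ^ (j+1)) ^ (-γ) * (ρ * (2:ℝ) ^ k) ^ (-eN))
            * (K * (ρ * (2:ℝ)⁻¹ ^ j) * (2 * (ρ * 2 ^ (k+1))) ^ n)) := by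
          rw [← ENNReal.ofReal_pow (by positivity), ← ENNReal.ofReal_mul (by positivity),
            ← ENNReal.ofReal_mul hc₁0]
      _ = ENNReal.ofReal (a * ρ ^ (-γ - 2*s)) * ENNReal.ofReal q₁ ^ j * ENNReal.ofReal q₂ ^ k := by
          rw [← ENNReal.ofReal_pow hq₁0, ← ENNReal.ofReal_pow hq₂0,
            ← ENNReal.ofReal_mul (by positivity), ← ENNReal.ofReal_mul (by positivity)]
          congr 1
          rw [ha_def, hq₁_def, hq₂_def, heN_def]
          linear_combination (C₀ * K) * dyadic_algebra n j k ρ γ s hρ0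
  -- sum the geometric series
  have hsum : ∑' jk : ℕ × ℕ, (ENNReal.ofReal (a * ρ ^ (-γ - 2*s)) * ENNReal.ofReal q₁ ^ jk.1
      * ENNReal.ofReal q₂ ^ jk.2) = ENNReal.ofReal (a * ρ ^ (-γ - 2*s)) * G := by
    rw [ENNReal.tsum_prod']
    have hinner : ∀ j : ℕ, ∑' k : ℕ, (ENNReal.ofReal (a * ρ ^ (-γ - 2*s))
        * ENNReal.ofReal q₁ ^ j * ENNReal.ofReal q₂ ^ k)
        = (ENNReal.ofReal (a * ρ ^ (-γ - 2*s)) * (1 - ENNReal.ofReal q₂)⁻¹)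
          * ENNReal.ofReal q₁ ^ j := fun j => by
      rw [ENNReal.tsum_mul_left, ENNReal.tsum_geometric]; ring
    rw [tsum_congr hinner, ENNReal.tsum_mul_left, ENNReal.tsum_geometric, hG_def]
    ring
  have hmain : (∫⁻ z in A, ENNReal.ofReal (u z * ‖z - x‖ ^ (-eN)))
      ≤ ENNReal.ofReal (a * ρ ^ (-γ - 2*s)) * G :=
    calc (∫⁻ z in A, ENNReal.ofReal (u z * ‖z - x‖ ^ (-eN)))
        ≤ ∫⁻ z in ⋃ jk : ℕ × ℕ, S jk, ENNReal.ofReal (u z * ‖z - x‖ ^ (-eN)) :=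
          lintegral_mono_set hcover
      _ ≤ ∑' jk : ℕ × ℕ, ∫⁻ z in S jk, ENNReal.ofReal (u z * ‖z - x‖ ^ (-eN)) :=
          lintegral_iUnion_le _ _
      _ ≤ ∑' jk : ℕ × ℕ, (ENNReal.ofReal (a * ρ ^ (-γ - 2*s)) * ENNReal.ofReal q₁ ^ jk.1
          * ENNReal.ofReal q₂ ^ jk.2) := ENNReal.tsum_le_tsum hterm
      _ = ENNReal.ofReal (a * ρ ^ (-γ - 2*s)) * G := hsum
  have hρ' : (0:ℝ) < ρ ^ (-γ - 2*s) := Real.rpow_pos_of_pos hρ0 _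
  have hIle : (∫ z in A, u z * ‖z - x‖ ^ (-eN)) ≤ a * ρ ^ (-γ - 2*s) * G.toReal := by
    rw [hIeq]
    calc (∫⁻ z in A, ENNReal.ofReal (u z * ‖z - x‖ ^ (-eN))).toReal
        ≤ (ENNReal.ofReal (a * ρ ^ (-γ - 2*s)) * G).toReal :=
          ENNReal.toReal_mono (ENNReal.mul_ne_top ENNReal.ofReal_ne_top hGtop) hmain
      _ = a * ρ ^ (-γ - 2*s) * G.toReal := by
          rw [ENNReal.toReal_mul, ENNReal.toReal_ofReal (by positivity)]
  calc CNs (n+1) s * ∫ z in A, u z * ‖z - x‖ ^ (-eN)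
      ≤ |CNs (n+1) s| * ∫ z in A, u z * ‖z - x‖ ^ (-eN) :=
        mul_le_mul_of_nonneg_right (le_abs_self _) hInn
    _ ≤ |CNs (n+1) s| * (a * ρ ^ (-γ - 2*s) * G.toReal) :=
        mul_le_mul_of_nonneg_left hIle (abs_nonneg _)
    _ ≤ C * ρ ^ (-γ - 2*s) := by
        rw [hC_def]
        nlinarith [abs_nonneg (CNs (n+1) s), ha0, hGt0, hρ'.le,
          mul_nonneg ha0 hGt0, mul_nonneg (mul_nonneg ha0 hGt0) hρ'.le]

end
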